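/- Let ψ(s) = 1 + γs² with γ > 0, n = 2, and ρ, m > 0. Then the function e(R) = 2πR·ψ(ū(R)) with ū(R) = (m − ρπR²)/(2πR), defined for R ∈ (0, √(m/(ρπ))), has exactly one critical point R*(γ) in that interval, given by R*(γ) = (1/ρ)·√((2√(γ²m²ρ² − πγmρ + π²) + γmρ − 2π)/(3πγ)), and R*(γ) → √(m/(ρπ)) as γ → +∞. -/

import Mathlib

open Filter Real

set_option maxHeartbeats 1000000 in
theorem stmt16 (ρ m : ℝ) (hρ : 0 < ρ) (hm : 0 < m)
    (Rm : ℝ) (hRm : Rm = Real.sqrt (m / (ρ * π)))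
    (ubar : ℝ → ℝ)
    (hubar : ∀ R : ℝ, ubar R = (m - ρ * π * R ^ 2) / (2 * π * R))
    (e : ℝ → ℝ → ℝ)
    (he : ∀ γ R : ℝ, e γ R = 2 * π * R * (1 + γ * ubar R ^ 2))
    (Rstar : ℝ → ℝ)
    (hRstar : ∀ γ : ℝ, Rstar γ = (1 / ρ) * Real.sqrt
      ((2 * Real.sqrt (γ ^ 2 * m ^ 2 * ρ ^ 2 - π * γ * m * ρ + π ^ 2) + γ * m * ρ - 2 * π) /
        (3 * π * γ))) :
    (∀ γ : ℝ, 0 < γ → Rstar γ ∈ Set.Ioo (0:ℝ) Rm ∧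
      ∀ R ∈ Set.Ioo (0:ℝ) Rm, (deriv (e γ) R = 0 ↔ R = Rstar γ)) ∧
    Tendsto Rstar atTop (nhds Rm) := by
  have hπ := Real.pi_pos
  constructor
  · intro γ hγ
    set s := Real.sqrt (γ ^ 2 * m ^ 2 * ρ ^ 2 - π * γ * m * ρ + π ^ 2) with hs
    have hDnn : (0:ℝ) ≤ γ ^ 2 * m ^ 2 * ρ ^ 2 - π * γ * m * ρ + π ^ 2 := by
      nlinarith [sq_nonneg (γ*m*ρ - π/2), sq_nonneg π]
    have hs2 : s^2 = γ ^ 2 * m ^ 2 * ρ ^ 2 - π * γ * m * ρ + π ^ 2 := Real.sq_sqrt hDnn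
    have hs0 : 0 ≤ s := Real.sqrt_nonneg _
    have key : 2*s + γ*m*ρ - 2*π > 0 := by
      nlinarith [mul_pos (mul_pos hγ hm) hρ, sq_nonneg (2*s - (2*π - γ*m*ρ))]
    have key2 : 2*s - γ*m*ρ + 2*π > 0 := by
      nlinarith [mul_pos (mul_pos hγ hm) hρ, sq_nonneg (2*s - (γ*m*ρ - 2*π))]
    set x0 : ℝ := (2*s + γ*m*ρ - 2*π)/(3*π*γ*ρ^2) with hx0
    have hx0pos : 0 < x0 := by positivity
    -- Rstar γ = √x0
    have hRx : Rstar γ = Real.sqrt x0 := by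
      rw [hRstar, ← hs,
        show (2*s + γ*m*ρ - 2*π)/(3*π*γ) = x0 * ρ^2 by rw [hx0]; field_simp,
        Real.sqrt_mul (le_of_lt hx0pos), Real.sqrt_sq hρ.le]
      field_simp
    -- the quadratic identity
    have hq0 : 3*γ*ρ^2*π^2*x0^2 + (4*π^2 - 2*γ*ρ*π*m)*x0 - γ*m^2 = 0 := by
      rw [hx0]
      have h1 : γ ≠ 0 := hγ.ne'
      have h2 : ρ ≠ 0 := hρ.ne'
      have h3 : π ≠ 0 := hπ.ne'
      field_simp
      linear_combination 4 * hs2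
    have h3x0 : 3*γ*ρ^2*π^2*x0 = π*(2*s + γ*m*ρ - 2*π) := by
      rw [hx0]; field_simp
    clear_value s x0
    -- x0 < m/(ρπ)
    have hx0lt : x0 < m/(ρ*π) := by
      by_contra hcon
      push_neg at hcon
      have hq : 3*γ*ρ^2*π^2*(m/(ρ*π))^2 + (4*π^2 - 2*γ*ρ*π*m)*(m/(ρ*π)) - γ*m^2
          = 4*π*m/ρ := by field_simp; ring
      have hP : 0 < 3*γ*ρ^2*π^2*(m/(ρ*π)+x0) + (4*π^2 - 2*γ*ρ*π*m) := by
        have t1 : (0:ℝ) < 3*γ*ρ^2*π^2*(m/(ρ*π)) := by positivity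
        have t2 : 3*γ*ρ^2*π^2*(m/(ρ*π)+x0) = 3*γ*ρ^2*π^2*(m/(ρ*π)) + 3*γ*ρ^2*π^2*x0 := by
          ring
        linarith [mul_pos hπ key2, t1, t2, h3x0]
      have hfacM : (m/(ρ*π) - x0) * (3*γ*ρ^2*π^2*(m/(ρ*π)+x0) + (4*π^2 - 2*γ*ρ*π*m))
          = 4*π*m/ρ := by linear_combination hq - hq0
      have hle : (m/(ρ*π) - x0) * (3*γ*ρ^2*π^2*(m/(ρ*π)+x0) + (4*π^2 - 2*γ*ρ*π*m)) ≤ 0 :=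
        mul_nonpos_of_nonpos_of_nonneg (by linarith) hP.le
      have h4 : (0:ℝ) < 4*π*m/ρ := by positivity
      linarith
    have hRmpos : 0 < Rm := by
      rw [hRm]; exact Real.sqrt_pos.mpr (div_pos hm (mul_pos hρ hπ))
    have hmem : Rstar γ ∈ Set.Ioo (0:ℝ) Rm := by
      constructor
      · rw [hRx]; exact Real.sqrt_pos.mpr hx0pos
      · rw [hRx, hRm]
        exact Real.sqrt_lt_sqrt hx0pos.le hx0lt
    refine ⟨hmem, ?_⟩
    rintro R ⟨hR0, hRlt⟩
    -- rewrite e γ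
    have hee : e γ = fun x : ℝ => 2*π*x + γ*(m - ρ*π*x^2)^2/(2*π*x) := by
      funext x
      rw [he, hubar]
      rcases eq_or_ne x 0 with h | h
      · simp [h]
      · field_simp
    have hRne : R ≠ 0 := hR0.ne'
    have hne2 : 2*π*R ≠ 0 := by positivity
    have hF : HasDerivAt (fun x : ℝ => 2*π*x + γ*(m - ρ*π*x^2)^2/(2*π*x))
        (2*π + ((γ*(2*(m-ρ*π*R^2)*(-(ρ*π*(2*R)))))*(2*π*R) - γ*(m-ρ*π*R^2)^2*(2*π))/(2*π*R)^2)
        R := by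
      have hA : HasDerivAt (fun x : ℝ => m - ρ*π*x^2) (-(ρ*π*(2*R))) R := by
        have h := ((hasDerivAt_pow 2 R).const_mul (ρ*π)).const_sub m
        simpa using h
      have hB : HasDerivAt (fun x : ℝ => γ*(m - ρ*π*x^2)^2)
          (γ*(2*(m-ρ*π*R^2)*(-(ρ*π*(2*R))))) R := by
        have h := (hA.pow 2).const_mul γ
        simpa [mul_comm, mul_assoc, mul_left_comm] using h
      have hC : HasDerivAt (fun x : ℝ => 2*π*x) (2*π) R := by
        simpa using (hasDerivAt_id R).const_mul (2*π)
      exact hC.add (hB.div hC hne2)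
    have hd : deriv (e γ) R
        = 2*π - γ*(m-ρ*π*R^2)*(m+3*ρ*π*R^2)/(2*π*R^2) := by
      rw [hee, hF.deriv]
      field_simp
      ring
    have hR2pos : 0 < R^2 := by positivity
    constructor
    · intro h0
      rw [hd] at h0
      have hmain : 4*π^2*R^2 = γ*(m-ρ*π*R^2)*(m+3*ρ*π*R^2) := by
        have h4 : γ*(m-ρ*π*R^2)*(m+3*ρ*π*R^2)/(2*π*R^2) = 2*π := by linarith
        field_simp at h4
        linarith
      have hqR : 3*γ*ρ^2*π^2*(R^2)^2 + (4*π^2 - 2*γ*ρ*π*m)*(R^2) - γ*m^2 = 0 := by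
        linear_combination hmain
      have hfac : (R^2 - x0) * (3*γ*ρ^2*π^2*(R^2 + x0) + (4*π^2 - 2*γ*ρ*π*m)) = 0 := by
        linear_combination hqR - hq0
      have hpos : 0 < 3*γ*ρ^2*π^2*(R^2 + x0) + (4*π^2 - 2*γ*ρ*π*m) := by
        have t1 : (0:ℝ) ≤ 3*γ*ρ^2*π^2*R^2 := by positivity
        have t2 : 3*γ*ρ^2*π^2*(R^2 + x0) = 3*γ*ρ^2*π^2*R^2 + 3*γ*ρ^2*π^2*x0 := by ring
        linarith [mul_pos hπ key2, t1, t2, h3x0]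
      have hR2 : R^2 = x0 := by
        rcases mul_eq_zero.mp hfac with h | h
        · linarith
        · linarith
      rw [hRx, ← hR2]
      exact (Real.sqrt_sq hR0.le).symm
    · intro h
      have hR2 : R^2 = x0 := by
        rw [h, hRx, Real.sq_sqrt hx0pos.le]
      rw [hd]
      have hmain : γ*(m-ρ*π*R^2)*(m+3*ρ*π*R^2) = 4*π^2*R^2 := by
        have := hq0
        rw [← hR2] at this
        linear_combination -this
      rw [hmain]
      field_simp
      ring
  · -- the limit
    set g : ℝ → ℝ := fun t => (1/ρ) * Real.sqrt
        ((2 * Real.sqrt (m^2*ρ^2 - π*m*ρ*t + π^2*t^2) + m*ρ - 2*π*t)/(3*π)) with hg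
    have hgc : ContinuousAt g 0 := by fun_prop
    have hg0 : g 0 = Rm := by
      have h1 : Real.sqrt (m^2*ρ^2 - π*m*ρ*0 + π^2*0^2) = m*ρ := by
        rw [show m^2*ρ^2 - π*m*ρ*0 + π^2*0^2 = (m*ρ)^2 by ring]
        exact Real.sqrt_sq (by positivity)
      rw [hg]
      simp only [h1]
      rw [show (2*(m*ρ) + m*ρ - 2*π*0)/(3*π) = (m/(ρ*π))*ρ^2 by field_simp; ring,
        Real.sqrt_mul (by positivity), Real.sqrt_sq hρ.le, hRm]
      field_simp
    have h2 : Tendsto (fun γ : ℝ => g γ⁻¹) atTop (nhds Rm) := by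
      rw [← hg0]
      exact (hgc.tendsto).comp tendsto_inv_atTop_zero
    refine h2.congr' ?_
    filter_upwards [eventually_gt_atTop (0:ℝ)] with γ hγ
    have hD : (0:ℝ) ≤ γ ^ 2 * m ^ 2 * ρ ^ 2 - π * γ * m * ρ + π ^ 2 := by
      nlinarith [sq_nonneg (γ*m*ρ - π/2), sq_nonneg π]
    have hs : Real.sqrt (m^2*ρ^2 - π*m*ρ*γ⁻¹ + π^2*(γ⁻¹)^2)
        = Real.sqrt (γ ^ 2 * m ^ 2 * ρ ^ 2 - π * γ * m * ρ + π ^ 2) / γ := by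
      rw [show m^2*ρ^2 - π*m*ρ*γ⁻¹ + π^2*(γ⁻¹)^2
          = (γ ^ 2 * m ^ 2 * ρ ^ 2 - π * γ * m * ρ + π ^ 2)/γ^2 by field_simp,
        Real.sqrt_div hD, Real.sqrt_sq hγ.le]
    rw [hRstar γ, hg]
    simp only [hs]
    congr 2
    field_simp
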